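/- arXiv:2602.04700 — 4 statements merged into one kernel-verified Lean document; each statement's English description precedes it below -/
import Mathlib

section
/- Let D = (G, w) be a weighted dynamical graph with g_D(x) = Σ_{e ∈ E} s(e,x) w(e), and suppose max_{v ∈ V} Σ_{e ∈ E(v)} |w(e)| = ε, where E(v) is the set of edges incident to v. Then δ(D) := max_{x ∈ {-1,1}^{n+1}} g_D(x) − min_{x ∈ {-1,1}^{n+1}} g_D(x) ≥ 2ε. -/
/-- The value `g_D(x) = Σ_{e ∈ E} s(e,x) w(e)` of a weighted dynamical graph on
vertices `v_0, ..., v_n`, encoded by a symmetric weight function `w` with zero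
diagonal (single-vertex edges `{v_j}` are encoded as `w 0 j`, acting via the
ancilla coordinate `x 0`). -/
def gD {n : ℕ} (w : Fin (n + 1) → Fin (n + 1) → ℝ) (x : Fin (n + 1) → ℝ) : ℝ :=
  ∑ i : Fin (n + 1), ∑ j : Fin (n + 1), if i < j then w i j * (x i * x j) else 0

/-- The `±1` point of the cube associated to a Boolean vector. -/
def toPM {n : ℕ} (ε : Fin n → Bool) : Fin n → ℝ := fun i => if ε i then 1 else -1

/-- The maximum difference `δ(D) = max_x g_D(x) − min_x g_D(x)` over `{-1,1}^{n+1}`. -/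
noncomputable def deltaD {n : ℕ} (w : Fin (n + 1) → Fin (n + 1) → ℝ) : ℝ :=
  (Finset.univ.sup' Finset.univ_nonempty fun ε : Fin (n + 1) → Bool => gD w (toPM ε)) -
  (Finset.univ.inf' Finset.univ_nonempty fun ε : Fin (n + 1) → Bool => gD w (toPM ε))

lemma gD_two {n : ℕ} (w : Fin (n + 1) → Fin (n + 1) → ℝ)
    (hsym : ∀ i j, w i j = w j i) (hdiag : ∀ i, w i i = 0) (x : Fin (n + 1) → ℝ) :
    2 * gD w x = ∑ i : Fin (n + 1), ∑ j : Fin (n + 1), w i j * (x i * x j) := by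
  have key : ∀ i j : Fin (n + 1), w i j * (x i * x j) =
      (if i < j then w i j * (x i * x j) else 0) +
      (if j < i then w i j * (x i * x j) else 0) := by
    intro i j
    rcases lt_trichotomy i j with h | h | h
    · simp [h, asymm h]
    · subst h; simp [hdiag i]
    · simp [h, asymm h]
  have h2 : (∑ i : Fin (n + 1), ∑ j : Fin (n + 1),
      if j < i then w i j * (x i * x j) else 0) = gD w x := by
    rw [Finset.sum_comm]
    unfold gD
    refine Finset.sum_congr rfl fun i _ => Finset.sum_congr rfl fun j _ => ?_
    rw [hsym j i, mul_comm (x j) (x i)]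
  calc 2 * gD w x = gD w x + gD w x := by ring
    _ = ∑ i : Fin (n + 1), ∑ j : Fin (n + 1), w i j * (x i * x j) := by
        nth_rewrite 2 [h2.symm]
        unfold gD
        rw [← Finset.sum_add_distrib]
        refine Finset.sum_congr rfl fun i _ => ?_
        rw [← Finset.sum_add_distrib]
        exact (Finset.sum_congr rfl fun j _ => (key i j).symm)

/-- Lower bound: if the largest total absolute weight incident to a single vertex is `ε`,
then `δ(D) ≥ 2ε`. -/
theorem stmt2 (n : ℕ) (w : Fin (n + 1) → Fin (n + 1) → ℝ)
    (hsym : ∀ i j, w i j = w j i) (hdiag : ∀ i, w i i = 0) (ε : ℝ)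
    (hmax : (Finset.univ.sup' Finset.univ_nonempty
      fun v : Fin (n + 1) => ∑ j ∈ Finset.univ.filter (· ≠ v), |w v j|) = ε) :
    2 * ε ≤ deltaD w := by
  obtain ⟨v, -, hv⟩ := Finset.exists_mem_eq_sup' (Finset.univ_nonempty (α := Fin (n + 1)))
    (fun v : Fin (n + 1) => ∑ j ∈ Finset.univ.filter (· ≠ v), |w v j|)
  rw [hv] at hmax
  -- choose sign vectors
  set e : Fin (n + 1) → Bool := fun j => if j = v then true else decide (0 ≤ w v j) with he
  set e' : Fin (n + 1) → Bool := Function.update e v false with he'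
  set x : Fin (n + 1) → ℝ := toPM e with hx
  set x' : Fin (n + 1) → ℝ := toPM e' with hx'
  have hxv : x v = 1 := by simp [hx, toPM, he]
  have hx'v : x' v = -1 := by simp [hx', toPM, he']
  have hagree : ∀ j, j ≠ v → x' j = x j := by
    intro j hj
    simp [hx, hx', toPM, he', Function.update_of_ne hj]
  have habs : ∀ j, j ≠ v → w v j * x j = |w v j| := by
    intro j hj
    have : x j = if 0 ≤ w v j then 1 else -1 := by
      simp [hx, toPM, he, hj]
    rw [this]
    rcases le_or_gt 0 (w v j) with h | h
    · simp [h, abs_of_nonneg h]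
    · simp [not_le.mpr h, abs_of_neg h]
  -- the key difference computation
  have hdiff : gD w x - gD w x' = 2 * ∑ j ∈ Finset.univ.filter (· ≠ v), |w v j| := by
    have h2 : 2 * (gD w x - gD w x') =
        ∑ i : Fin (n + 1), ∑ j : Fin (n + 1), w i j * (x i * x j - x' i * x' j) := by
      rw [mul_sub, gD_two w hsym hdiag x, gD_two w hsym hdiag x',
        ← Finset.sum_sub_distrib]
      refine Finset.sum_congr rfl fun i _ => ?_
      rw [← Finset.sum_sub_distrib]
      exact Finset.sum_congr rfl fun j _ => by ring
    have hterm : ∀ i j : Fin (n + 1), w i j * (x i * x j - x' i * x' j) =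
        (if i = v then (if j = v then 0 else 2 * |w v j|) else 0) +
        (if j = v then (if i = v then 0 else 2 * |w v i|) else 0) := by
      intro i j
      by_cases hi : i = v <;> by_cases hj : j = v
      · rw [hi, hj]; simp [hdiag]
      · rw [hi]
        rw [hagree j hj, hxv, hx'v]
        simp only [if_pos rfl, if_neg hj]
        rw [show (1 : ℝ) * x j - -1 * x j = 2 * x j by ring]
        rw [show w v j * (2 * x j) = 2 * (w v j * x j) by ring, habs j hj]
        simp
      · rw [hj]
        rw [hagree i hi, hxv, hx'v]
        simp only [if_pos rfl, if_neg hi]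
        rw [show x i * (1:ℝ) - x i * -1 = 2 * x i by ring]
        rw [show w i v * (2 * x i) = 2 * (w v i * x i) by rw [hsym i v]; ring, habs i hi]
        simp
      · rw [hagree i hi, hagree j hj]
        simp [hi, hj]
    have hsum : (∑ i : Fin (n + 1), ∑ j : Fin (n + 1),
        w i j * (x i * x j - x' i * x' j)) =
        4 * ∑ j ∈ Finset.univ.filter (· ≠ v), |w v j| := by
      have : (∑ i : Fin (n + 1), ∑ j : Fin (n + 1), w i j * (x i * x j - x' i * x' j)) =
          (∑ i : Fin (n + 1), ∑ j : Fin (n + 1),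
            ((if i = v then (if j = v then 0 else 2 * |w v j|) else 0) +
             (if j = v then (if i = v then 0 else 2 * |w v i|) else 0))) := by
        exact Finset.sum_congr rfl fun i _ => Finset.sum_congr rfl fun j _ => hterm i j
      rw [this]
      have hA : (∑ i : Fin (n + 1), ∑ j : Fin (n + 1),
          (if i = v then (if j = v then 0 else 2 * |w v j|) else 0)) =
          2 * ∑ j ∈ Finset.univ.filter (· ≠ v), |w v j| := by
        rw [Finset.sum_eq_single v
          (fun i _ hi => by simp [hi, Finset.sum_eq_zero]) (by simp)]
        simp only [if_pos rfl]
        rw [Finset.mul_sum, Finset.sum_filter]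
        refine Finset.sum_congr rfl fun j _ => ?_
        by_cases hj : j = v <;> simp [hj]
      have hB : (∑ i : Fin (n + 1), ∑ j : Fin (n + 1),
          (if j = v then (if i = v then 0 else 2 * |w v i|) else 0)) =
          2 * ∑ j ∈ Finset.univ.filter (· ≠ v), |w v j| := by
        rw [Finset.sum_comm]
        rw [Finset.sum_eq_single v
          (fun j _ hj => by simp [hj, Finset.sum_eq_zero]) (by simp)]
        simp only [if_pos rfl]
        rw [Finset.mul_sum, Finset.sum_filter]
        refine Finset.sum_congr rfl fun i _ => ?_
        by_cases hi : i = v <;> simp [hi]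
      rw [show (∑ i : Fin (n+1), ∑ j : Fin (n+1),
        (((if i = v then (if j = v then 0 else 2 * |w v j|) else 0) : ℝ) +
         ((if j = v then (if i = v then 0 else 2 * |w v i|) else 0) : ℝ))) =
        (∑ i : Fin (n+1), ∑ j : Fin (n+1),
          ((if i = v then (if j = v then 0 else 2 * |w v j|) else 0) : ℝ)) +
        (∑ i : Fin (n+1), ∑ j : Fin (n+1),
          ((if j = v then (if i = v then 0 else 2 * |w v i|) else 0) : ℝ)) from by
        rw [← Finset.sum_add_distrib]
        exact Finset.sum_congr rfl fun i _ => Finset.sum_add_distrib]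
      rw [hA, hB]; ring
    linarith [h2, hsum]
  -- conclude
  have hle1 : gD w x ≤ Finset.univ.sup' Finset.univ_nonempty
      fun ε : Fin (n + 1) → Bool => gD w (toPM ε) :=
    by exact Finset.le_sup' (fun ε : Fin (n + 1) → Bool => gD w (toPM ε)) (Finset.mem_univ e)
  have hle2 : (Finset.univ.inf' Finset.univ_nonempty
      fun ε : Fin (n + 1) → Bool => gD w (toPM ε)) ≤ gD w x' :=
    by exact Finset.inf'_le (fun ε : Fin (n + 1) → Bool => gD w (toPM ε)) (Finset.mem_univ e')
  have : 2 * ε ≤ gD w x - gD w x' := by rw [hdiff, hmax]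
  unfold deltaD
  linarith
end

section
/- Let g : {-1,1}^n → ℝ and g' : {-1,1}^m → ℝ be functions whose Fourier expansions have zero constant term, and let K, K' ∈ ℝ. Define g'' on {-1,1}^{n+m} by g''(x, x') = (g(x) + K)·(g'(x') + K') − K·K'. Then g'' has zero constant Fourier coefficient and L(g'') = (L(g) + |K|)·(L(g') + |K'|) − |K·K'|. -/
/-- `x` is a point of the Boolean cube `{-1,1}^n`. -/
def IsCube {n : ℕ} (x : Fin n → ℝ) : Prop := ∀ i, x i = 1 ∨ x i = -1

/-- `α` is the Fourier expansion of `g`: `g = Σ_b α_b χ_b` on the cube. -/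
def Represents {n : ℕ} (g : (Fin n → ℝ) → ℝ) (α : Finset (Fin n) → ℝ) : Prop :=
  ∀ x : Fin n → ℝ, IsCube x → g x = ∑ b : Finset (Fin n), α b * ∏ i ∈ b, x i

open Finset

def pt {n : ℕ} (σ : Fin n → Bool) : Fin n → ℝ := fun i => if σ i then 1 else -1

lemma pt_cube {n : ℕ} (σ : Fin n → Bool) : IsCube (pt σ) := by
  intro i; unfold pt; split <;> simp

lemma charSum {n : ℕ} (d : Finset (Fin n)) :
    ∑ σ : Fin n → Bool, ∏ i ∈ d, pt σ i = if d = ∅ then (2:ℝ)^n else 0 := by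
  have h1 : ∀ σ : Fin n → Bool, ∏ i ∈ d, pt σ i
      = ∏ i : Fin n, (if i ∈ d then (if σ i then (1:ℝ) else -1) else 1) := by
    intro σ
    rw [Finset.prod_ite_mem, Finset.univ_inter]
    rfl
  simp_rw [h1]
  have h2 := Finset.prod_univ_sum (fun _ : Fin n => (Finset.univ : Finset Bool))
      (fun i b => if i ∈ d then (if b then (1:ℝ) else -1) else 1)
  rw [Fintype.piFinset_univ] at h2
  rw [← h2]
  have h3 : ∀ i : Fin n, (∑ b : Bool, if i ∈ d then (if b then (1:ℝ) else -1) else 1)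
      = if i ∈ d then 0 else 2 := by
    intro i; by_cases h : i ∈ d <;> simp [h]
  simp_rw [h3]
  by_cases hd : d = ∅
  · simp [hd]
  · rw [if_neg hd]
    obtain ⟨i, hi⟩ := Finset.nonempty_iff_ne_empty.2 hd
    exact Finset.prod_eq_zero (Finset.mem_univ i) (by simp [hi])

lemma orth {n : ℕ} (b c : Finset (Fin n)) :
    ∑ σ : Fin n → Bool, (∏ i ∈ b, pt σ i) * (∏ i ∈ c, pt σ i)
      = if b = c then (2:ℝ)^n else 0 := by
  have key : ∀ σ : Fin n → Bool,
      (∏ i ∈ b, pt σ i) * (∏ i ∈ c, pt σ i) = ∏ i ∈ symmDiff b c, pt σ i := by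
    intro σ
    have h1 : (∏ i ∈ b ∪ c, pt σ i) * ∏ i ∈ b ∩ c, pt σ i
        = (∏ i ∈ b, pt σ i) * ∏ i ∈ c, pt σ i := Finset.prod_union_inter
    have h2 : b ∪ c = symmDiff b c ∪ (b ∩ c) := by
      rw [← inf_eq_inter]; exact (symmDiff_sup_inf b c).symm
    have h3 : Disjoint (symmDiff b c) (b ∩ c) := disjoint_symmDiff_inf b c
    have hsq : (∏ i ∈ b ∩ c, pt σ i) * ∏ i ∈ b ∩ c, pt σ i = 1 := by
      rw [← Finset.prod_mul_distrib]
      apply Finset.prod_eq_one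
      intro i _
      rcases pt_cube σ i with h | h <;> rw [h] <;> norm_num
    calc (∏ i ∈ b, pt σ i) * (∏ i ∈ c, pt σ i)
        = (∏ i ∈ b ∪ c, pt σ i) * ∏ i ∈ b ∩ c, pt σ i := h1.symm
      _ = ((∏ i ∈ symmDiff b c, pt σ i) * ∏ i ∈ b ∩ c, pt σ i) * ∏ i ∈ b ∩ c, pt σ i := by
          rw [h2, Finset.prod_union h3]
      _ = (∏ i ∈ symmDiff b c, pt σ i) * ((∏ i ∈ b ∩ c, pt σ i) * ∏ i ∈ b ∩ c, pt σ i) := by ring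
      _ = ∏ i ∈ symmDiff b c, pt σ i := by rw [hsq, mul_one]
  simp_rw [key, charSum]
  congr 1
  simp only [eq_iff_iff]
  constructor
  · intro h; rwa [← Finset.bot_eq_empty, symmDiff_eq_bot] at h
  · intro h; rw [h, symmDiff_self, Finset.bot_eq_empty]

lemma unique_coeff {n : ℕ} (δ : Finset (Fin n) → ℝ)
    (h : ∀ x : Fin n → ℝ, IsCube x → ∑ b : Finset (Fin n), δ b * ∏ i ∈ b, x i = 0)
    (c : Finset (Fin n)) : δ c = 0 := by
  have h2 : ∑ σ : Fin n → Bool, (∏ i ∈ c, pt σ i) *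
      ∑ b : Finset (Fin n), δ b * ∏ i ∈ b, pt σ i = 0 := by
    simp [fun σ => h (pt σ) (pt_cube σ)]
  have h3 : ∑ σ : Fin n → Bool, (∏ i ∈ c, pt σ i) *
      ∑ b : Finset (Fin n), δ b * ∏ i ∈ b, pt σ i
      = ∑ b : Finset (Fin n), δ b * ∑ σ : Fin n → Bool,
          (∏ i ∈ b, pt σ i) * (∏ i ∈ c, pt σ i) := by
    simp_rw [Finset.mul_sum]
    rw [Finset.sum_comm]
    refine Finset.sum_congr rfl fun b _ => ?_
    exact Finset.sum_congr rfl fun σ _ => by ring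
  rw [h3] at h2
  simp_rw [orth] at h2
  simp only [mul_ite, mul_zero, Finset.sum_ite_eq' Finset.univ c, Finset.mem_univ, if_true] at h2
  have : (2:ℝ)^n ≠ 0 := by positivity
  rcases mul_eq_zero.mp h2 with h | h
  · exact h
  · exact absurd h this

lemma represents_unique {n : ℕ} (g : (Fin n → ℝ) → ℝ) (α β : Finset (Fin n) → ℝ)
    (hα : ∀ x, IsCube x → g x = ∑ b : Finset (Fin n), α b * ∏ i ∈ b, x i)
    (hβ : ∀ x, IsCube x → g x = ∑ b : Finset (Fin n), β b * ∏ i ∈ b, x i) :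
    α = β := by
  funext c
  have := unique_coeff (fun b => α b - β b) (fun x hx => by
    simp only [sub_mul, Finset.sum_sub_distrib]
    rw [← hα x hx, ← hβ x hx, sub_self]) c
  linarith


section helpers
variable {n m : ℕ}

def joinS (s : Finset (Fin n)) (t : Finset (Fin m)) : Finset (Fin (n + m)) :=
  s.map (Fin.castAddEmb m) ∪ t.map (Fin.natAddEmb n)

lemma castAdd_ne_natAdd (i : Fin n) (j : Fin m) : Fin.castAdd m i ≠ Fin.natAdd n j := by
  intro h
  have := congrArg Fin.val h
  simp [Fin.castAdd, Fin.natAdd] at this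
  omega

lemma mem_joinS_castAdd {s : Finset (Fin n)} {t : Finset (Fin m)} (i : Fin n) :
    Fin.castAdd m i ∈ joinS s t ↔ i ∈ s := by
  simp only [joinS, Finset.mem_union, Finset.mem_map]
  constructor
  · rintro (⟨a, ha, hae⟩ | ⟨a, ha, hae⟩)
    · have : a = i := Fin.castAdd_injective n m (by exact hae)
      rwa [← this]
    · exact absurd hae.symm (castAdd_ne_natAdd i a)
  · intro h; exact Or.inl ⟨i, h, rfl⟩

lemma mem_joinS_natAdd {s : Finset (Fin n)} {t : Finset (Fin m)} (j : Fin m) :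
    Fin.natAdd n j ∈ joinS s t ↔ j ∈ t := by
  simp only [joinS, Finset.mem_union, Finset.mem_map]
  constructor
  · rintro (⟨a, ha, hae⟩ | ⟨a, ha, hae⟩)
    · exact absurd hae (castAdd_ne_natAdd a j)
    · have : a = j := by
        have := congrArg Fin.val hae
        simp [Fin.natAdd] at this
        exact Fin.ext this
      rwa [← this]
  · intro h; exact Or.inr ⟨j, h, rfl⟩

def splitE (n m : ℕ) : Finset (Fin n) × Finset (Fin m) ≃ Finset (Fin (n + m)) where
  toFun p := joinS p.1 p.2
  invFun b := (Finset.univ.filter (fun i => Fin.castAdd m i ∈ b),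
               Finset.univ.filter (fun j => Fin.natAdd n j ∈ b))
  left_inv p := by
    ext1
    · ext i; simp [mem_joinS_castAdd]
    · ext j; simp [mem_joinS_natAdd]
  right_inv b := by
    ext k
    refine Fin.addCases (fun i => ?_) (fun j => ?_) k
    · rw [mem_joinS_castAdd]; simp
    · rw [mem_joinS_natAdd]; simp

lemma joinS_disj (s : Finset (Fin n)) (t : Finset (Fin m)) :
    Disjoint (s.map (Fin.castAddEmb m)) (t.map (Fin.natAddEmb n)) := by
  rw [Finset.disjoint_left]
  rintro k hk1 hk2
  simp only [Finset.mem_map] at hk1 hk2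
  obtain ⟨i, _, hi⟩ := hk1
  obtain ⟨j, _, hj⟩ := hk2
  refine castAdd_ne_natAdd i j ?_
  rw [show (Fin.castAddEmb m) i = Fin.castAdd m i from rfl] at hi
  rw [show (Fin.natAddEmb n) j = Fin.natAdd n j from rfl] at hj
  rw [hi, hj]

lemma prod_joinS (s : Finset (Fin n)) (t : Finset (Fin m)) (x : Fin (n + m) → ℝ) :
    ∏ k ∈ joinS s t, x k
      = (∏ i ∈ s, x (Fin.castAdd m i)) * ∏ j ∈ t, x (Fin.natAdd n j) := by
  rw [joinS, Finset.prod_union (joinS_disj s t), Finset.prod_map, Finset.prod_map]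
  rfl

lemma joinS_empty : joinS (∅ : Finset (Fin n)) (∅ : Finset (Fin m)) = ∅ := by
  simp [joinS]

end helpers


lemma sum_ite_pair {n m : ℕ} (c : ℝ) :
    ∑ s : Finset (Fin n), ∑ t : Finset (Fin m), (if (s, t) = (∅, ∅) then c else 0) = c := by
  simp [Prod.mk.injEq, ite_and, Finset.sum_ite_eq']

/-- If `g` and `g'` have zero constant Fourier coefficient, then
`g''(x,x') = (g(x)+K)(g'(x')+K') − K·K'` has zero constant coefficient and
`L(g'') = (L(g)+|K|)(L(g')+|K'|) − |K·K'|`. -/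
theorem stmt6 (n m : ℕ) (g : (Fin n → ℝ) → ℝ) (g' : (Fin m → ℝ) → ℝ) (K K' : ℝ)
    (α : Finset (Fin n) → ℝ) (α' : Finset (Fin m) → ℝ)
    (γ : Finset (Fin (n + m)) → ℝ)
    (hα : Represents g α) (h0 : α ∅ = 0)
    (hα' : Represents g' α') (h0' : α' ∅ = 0)
    (hγ : Represents
      (fun x : Fin (n + m) → ℝ =>
        (g (fun i => x (Fin.castAdd m i)) + K) * (g' (fun j => x (Fin.natAdd n j)) + K')
          - K * K') γ) :
    γ ∅ = 0 ∧
    ∑ b : Finset (Fin (n + m)), |γ b| =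
      ((∑ b : Finset (Fin n), |α b|) + |K|) * ((∑ b : Finset (Fin m), |α' b|) + |K'|)
        - |K * K'| := by
  classical
  set A : Finset (Fin n) → ℝ := fun s => if s = ∅ then K else α s with hA
  set A' : Finset (Fin m) → ℝ := fun t => if t = ∅ then K' else α' t with hA'
  have sumA : ∀ y : Fin n → ℝ, IsCube y →
      ∑ s : Finset (Fin n), A s * ∏ i ∈ s, y i = g y + K := by
    intro y hy
    have hs : ∀ s : Finset (Fin n), A s * ∏ i ∈ s, y i
        = α s * ∏ i ∈ s, y i + (if s = ∅ then K * ∏ i ∈ s, y i else 0) := by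
      intro s; by_cases h : s = ∅ <;> simp [hA, h, h0]
    simp_rw [hs, Finset.sum_add_distrib]
    rw [← hα y hy, Finset.sum_ite_eq' Finset.univ (∅ : Finset (Fin n))]
    simp
  have sumA' : ∀ y : Fin m → ℝ, IsCube y →
      ∑ t : Finset (Fin m), A' t * ∏ j ∈ t, y j = g' y + K' := by
    intro y hy
    have hs : ∀ t : Finset (Fin m), A' t * ∏ j ∈ t, y j
        = α' t * ∏ j ∈ t, y j + (if t = ∅ then K' * ∏ j ∈ t, y j else 0) := by
      intro t; by_cases h : t = ∅ <;> simp [hA', h, h0']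
    simp_rw [hs, Finset.sum_add_distrib]
    rw [← hα' y hy, Finset.sum_ite_eq' Finset.univ (∅ : Finset (Fin m))]
    simp
  set e := splitE n m with he
  set β : Finset (Fin (n + m)) → ℝ := fun b =>
    A (e.symm b).1 * A' (e.symm b).2 - (if b = ∅ then K * K' else 0) with hβdef
  have he0 : e (∅, ∅) = (∅ : Finset (Fin (n + m))) := joinS_empty
  have hcond : ∀ p : Finset (Fin n) × Finset (Fin m), (e p = ∅ ↔ p = (∅, ∅)) := by
    intro p; rw [← he0, Equiv.apply_eq_iff_eq]
  have hbe : ∀ p : Finset (Fin n) × Finset (Fin m),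
      β (e p) = A p.1 * A' p.2 - (if p = (∅, ∅) then K * K' else 0) := by
    intro p
    simp only [hβdef, Equiv.symm_apply_apply]
    congr 1
    by_cases hp : p = (∅, ∅)
    · rw [if_pos hp, if_pos ((hcond p).2 hp)]
    · rw [if_neg hp, if_neg (fun h => hp ((hcond p).1 h))]
  have hprod : ∀ (p : Finset (Fin n) × Finset (Fin m)) (x : Fin (n + m) → ℝ),
      ∏ k ∈ e p, x k
        = (∏ i ∈ p.1, x (Fin.castAdd m i)) * ∏ j ∈ p.2, x (Fin.natAdd n j) := by
    intro p x
    exact prod_joinS p.1 p.2 x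
  have hβrep : Represents (fun x : Fin (n + m) → ℝ =>
      (g (fun i => x (Fin.castAdd m i)) + K) * (g' (fun j => x (Fin.natAdd n j)) + K')
        - K * K') β := by
    intro x hx
    have hx1 : IsCube (fun i => x (Fin.castAdd m i)) := fun i => hx _
    have hx2 : IsCube (fun j => x (Fin.natAdd n j)) := fun j => hx _
    have e1 : ∑ p : Finset (Fin n) × Finset (Fin m), β (e p) * ∏ i ∈ e p, x i
        = ∑ b : Finset (Fin (n + m)), β b * ∏ i ∈ b, x i :=
      Fintype.sum_equiv e _ _ (fun p => rfl)
    rw [← e1]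
    have expand : ∀ p : Finset (Fin n) × Finset (Fin m),
        β (e p) * ∏ i ∈ e p, x i
        = (A p.1 * ∏ i ∈ p.1, x (Fin.castAdd m i))
            * (A' p.2 * ∏ j ∈ p.2, x (Fin.natAdd n j))
          - (if p = (∅, ∅) then K * K' else 0) := by
      intro p
      rw [hbe p, hprod p x]
      by_cases hp : p = (∅, ∅)
      · subst hp; simp
      · rw [if_neg hp]; ring
    simp_rw [expand, Finset.sum_sub_distrib, Fintype.sum_prod_type]
    rw [← Finset.sum_mul_sum, sumA _ hx1, sumA' _ hx2, sum_ite_pair]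
  have hgb : γ = β := represents_unique _ γ β hγ hβrep
  have hsymm0 : e.symm (∅ : Finset (Fin (n + m))) = (∅, ∅) := by
    rw [Equiv.symm_apply_eq, he0]
  constructor
  · rw [hgb, hβdef]
    simp [hsymm0, hA, hA']
  · rw [hgb]
    have e2 : ∑ p : Finset (Fin n) × Finset (Fin m), |β (e p)|
        = ∑ b : Finset (Fin (n + m)), |β b| :=
      Fintype.sum_equiv e _ _ (fun p => rfl)
    rw [← e2]
    have habs : ∀ p : Finset (Fin n) × Finset (Fin m),
        |β (e p)| = |A p.1| * |A' p.2| - (if p = (∅, ∅) then |K * K'| else 0) := by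
      intro p
      rw [hbe p]
      by_cases hp : p = (∅, ∅)
      · subst hp
        simp [hA, hA', abs_mul]
      · rw [if_neg hp, if_neg hp, sub_zero, sub_zero, abs_mul]
    simp_rw [habs, Finset.sum_sub_distrib, Fintype.sum_prod_type]
    rw [← Finset.sum_mul_sum, sum_ite_pair]
    have sAbs : ∑ s : Finset (Fin n), |A s| = (∑ s : Finset (Fin n), |α s|) + |K| := by
      have hs : ∀ s : Finset (Fin n), |A s| = |α s| + (if s = ∅ then |K| else 0) := by
        intro s; by_cases h : s = ∅ <;> simp [hA, h, h0]
      simp_rw [hs, Finset.sum_add_distrib,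
        Finset.sum_ite_eq' Finset.univ (∅ : Finset (Fin n))]
      simp
    have sAbs' : ∑ t : Finset (Fin m), |A' t| = (∑ t : Finset (Fin m), |α' t|) + |K'| := by
      have hs : ∀ t : Finset (Fin m), |A' t| = |α' t| + (if t = ∅ then |K'| else 0) := by
        intro t; by_cases h : t = ∅ <;> simp [hA', h, h0']
      simp_rw [hs, Finset.sum_add_distrib,
        Finset.sum_ite_eq' Finset.univ (∅ : Finset (Fin m))]
      simp
    rw [sAbs, sAbs']
end

section
/- Let f : S → {0,1} and f' : T → {0,1} be partial Boolean functions with f = g_D + K on S ⊆ {-1,1}^n and f' = g_{D'} + K' on T ⊆ {-1,1}^m, where g_D, g_{D'} have zero constant Fourier coefficient. Define g''(x,x') = (1−K')·g_D(x) + (1−K)·g_{D'}(x') − g_D(x)·g_{D'}(x'). Then g''(x,x') = f''(x,x') − (K + K' − K·K') for (x,x') ∈ S × T, where f''(x,x') = f(x) + f'(x') − f(x)·f'(x') is the OR of f and f'; moreover L(g'') = |1−K'|·L(g_D) + |1−K|·L(g_{D'}) + L(g_D)·L(g_{D'}). -/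
noncomputable def sgn (t : Bool) : ℝ := if t then 1 else -1

lemma cube_sgn {n : ℕ} (y : Fin n → Bool) : IsCube (fun i => sgn (y i)) := by
  intro i; by_cases h : y i <;> simp [sgn, h]

lemma sum_chi {n : ℕ} (b : Finset (Fin n)) :
    ∑ y : Fin n → Bool, ∏ i ∈ b, sgn (y i) = if b = ∅ then (2:ℝ)^n else 0 := by
  have h1 : ∀ y : Fin n → Bool, ∏ i ∈ b, sgn (y i)
      = ∏ i : Fin n, (if i ∈ b then sgn (y i) else 1) := by
    intro y
    rw [← Finset.prod_filter, Finset.filter_univ_mem]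
  simp_rw [h1]
  have h2 : ∑ y : Fin n → Bool, ∏ i : Fin n, (if i ∈ b then sgn (y i) else 1)
      = ∏ i : Fin n, ∑ t : Bool, (if i ∈ b then sgn t else 1) := by
    rw [Finset.prod_univ_sum, Fintype.piFinset_univ]
  rw [h2]
  have h3 : ∀ i : Fin n, (∑ t : Bool, (if i ∈ b then sgn t else 1))
      = if i ∈ b then 0 else 2 := by
    intro i; by_cases h : i ∈ b <;> simp [h, sgn]
  simp_rw [h3]
  by_cases hb : b = ∅
  · simp [hb]
  · rw [if_neg hb]
    obtain ⟨i, hi⟩ := Finset.nonempty_iff_ne_empty.2 hb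
    exact Finset.prod_eq_zero (Finset.mem_univ i) (by simp [hi])

lemma sum_chi_mul {n : ℕ} (b c : Finset (Fin n)) :
    ∑ y : Fin n → Bool, (∏ i ∈ b, sgn (y i)) * ∏ i ∈ c, sgn (y i)
      = if b = c then (2:ℝ)^n else 0 := by
  have key : ∀ y : Fin n → Bool, (∏ i ∈ b, sgn (y i)) * ∏ i ∈ c, sgn (y i)
      = ∏ i ∈ (b \ c) ∪ (c \ b), sgn (y i) := by
    intro y
    have hb : (∏ i ∈ b, sgn (y i)) = (∏ i ∈ b \ c, sgn (y i)) * ∏ i ∈ b ∩ c, sgn (y i) := by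
      rw [← Finset.prod_union (Finset.disjoint_sdiff_inter b c), Finset.sdiff_union_inter]
    have hc : (∏ i ∈ c, sgn (y i)) = (∏ i ∈ c \ b, sgn (y i)) * ∏ i ∈ b ∩ c, sgn (y i) := by
      rw [Finset.inter_comm, ← Finset.prod_union (Finset.disjoint_sdiff_inter c b),
        Finset.sdiff_union_inter]
    have hsq : (∏ i ∈ b ∩ c, sgn (y i)) * ∏ i ∈ b ∩ c, sgn (y i) = 1 := by
      rw [← Finset.prod_mul_distrib]
      exact Finset.prod_eq_one fun i _ => by cases hy : y i <;> simp [sgn, hy]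
    calc (∏ i ∈ b, sgn (y i)) * ∏ i ∈ c, sgn (y i)
        = ((∏ i ∈ b \ c, sgn (y i)) * ∏ i ∈ c \ b, sgn (y i))
            * ((∏ i ∈ b ∩ c, sgn (y i)) * ∏ i ∈ b ∩ c, sgn (y i)) := by rw [hb, hc]; ring
      _ = (∏ i ∈ b \ c, sgn (y i)) * ∏ i ∈ c \ b, sgn (y i) := by rw [hsq, mul_one]
      _ = ∏ i ∈ (b \ c) ∪ (c \ b), sgn (y i) :=
          (Finset.prod_union disjoint_sdiff_sdiff).symm
  simp_rw [key]
  rw [sum_chi]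
  have hiff : (b \ c) ∪ (c \ b) = ∅ ↔ b = c := by
    rw [Finset.union_eq_empty]
    simp only [Finset.sdiff_eq_empty_iff_subset]
    exact ⟨fun ⟨h1', h2'⟩ => subset_antisymm h1' h2', fun h => by simp [h]⟩
  simp only [hiff]

lemma coeff_eq {n : ℕ} (g : (Fin n → ℝ) → ℝ) (α : Finset (Fin n) → ℝ)
    (hα : Represents g α) (c : Finset (Fin n)) :
    α c = (∑ y : Fin n → Bool, g (fun i => sgn (y i)) * ∏ i ∈ c, sgn (y i)) / 2 ^ n := by
  have h1 : ∑ y : Fin n → Bool, g (fun i => sgn (y i)) * ∏ i ∈ c, sgn (y i)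
      = ∑ b : Finset (Fin n), α b *
          ∑ y : Fin n → Bool, (∏ i ∈ b, sgn (y i)) * ∏ i ∈ c, sgn (y i) := by
    simp_rw [hα _ (cube_sgn _), Finset.sum_mul, Finset.mul_sum]
    rw [Finset.sum_comm]
    exact Finset.sum_congr rfl fun b _ => Finset.sum_congr rfl fun y _ => by ring
  simp_rw [sum_chi_mul, mul_ite, mul_zero, Finset.sum_ite_eq', Finset.mem_univ, if_true] at h1
  rw [h1]
  field_simp

lemma repr_unique {n : ℕ} (g : (Fin n → ℝ) → ℝ) (α β : Finset (Fin n) → ℝ)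
    (hα : Represents g α) (hβ : Represents g β) : α = β := by
  funext c
  rw [coeff_eq g α hα c, coeff_eq g β hβ c]

def pairFinsetEquiv (n m : ℕ) : Finset (Fin n) × Finset (Fin m) ≃ Finset (Fin (n + m)) :=
  Equiv.trans
    { toFun := fun p => p.1.disjSum p.2
      invFun := fun s => (s.toLeft, s.toRight)
      left_inv := fun p => by simp
      right_inv := fun s => Finset.toLeft_disjSum_toRight }
    finSumFinEquiv.finsetCongr

lemma prod_pairFinsetEquiv {n m : ℕ} (b : Finset (Fin n)) (c : Finset (Fin m))
    (x : Fin (n + m) → ℝ) :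
    ∏ j ∈ pairFinsetEquiv n m (b, c), x j
      = (∏ i ∈ b, x (Fin.castAdd m i)) * ∏ i ∈ c, x (Fin.natAdd n i) := by
  simp [pairFinsetEquiv, Equiv.finsetCongr_apply, Finset.prod_map, Finset.prod_disjSum]

lemma expand_sum {n m : ℕ} (K K' : ℝ) (α : Finset (Fin n) → ℝ) (α' : Finset (Fin m) → ℝ)
    (P : Finset (Fin n) → ℝ) (Q : Finset (Fin m) → ℝ) (hP : P ∅ = 1) (hQ : Q ∅ = 1) :
    ∑ b : Finset (Fin n), ∑ c : Finset (Fin m),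
        ((1 - K') * α b * (if c = ∅ then 1 else 0)
          + (1 - K) * α' c * (if b = ∅ then 1 else 0)
          - α b * α' c) * (P b * Q c)
      = (1 - K') * (∑ b, α b * P b) + (1 - K) * (∑ c, α' c * Q c)
        - (∑ b, α b * P b) * (∑ c, α' c * Q c) := by
  have h1 : ∀ (b : Finset (Fin n)) (c : Finset (Fin m)),
      ((1 - K') * α b * (if c = ∅ then 1 else 0)
        + (1 - K) * α' c * (if b = ∅ then 1 else 0) - α b * α' c) * (P b * Q c)
      = ((if c = ∅ then (1 - K') * (α b * P b) else 0)
          + (if b = ∅ then (1 - K) * (α' c * Q c) else 0))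
        - (α b * P b) * (α' c * Q c) := by
    intro b c
    by_cases hc : c = ∅ <;> by_cases hb : b = ∅ <;> simp [hb, hc, hP, hQ] <;> ring
  simp_rw [h1, Finset.sum_sub_distrib, Finset.sum_add_distrib]
  have e1 : ∑ b : Finset (Fin n), ∑ c : Finset (Fin m),
      (if c = ∅ then (1 - K') * (α b * P b) else 0) = (1 - K') * ∑ b, α b * P b := by
    simp_rw [Finset.sum_ite_eq', Finset.mem_univ, if_true, Finset.mul_sum]
  have e2 : ∑ b : Finset (Fin n), ∑ c : Finset (Fin m),
      (if b = ∅ then (1 - K) * (α' c * Q c) else 0) = (1 - K) * ∑ c, α' c * Q c := by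
    rw [Finset.sum_comm]
    simp_rw [Finset.sum_ite_eq', Finset.mem_univ, if_true, Finset.mul_sum]
  have e3 : ∑ b : Finset (Fin n), ∑ c : Finset (Fin m), (α b * P b) * (α' c * Q c)
      = (∑ b, α b * P b) * ∑ c, α' c * Q c := (Finset.sum_mul_sum _ _ _ _).symm
  rw [e1, e2, e3]

/-- OR composition: with `f = g_D + K` on `S`, `f' = g_{D'} + K'` on `T`, the function
`g''(x,x') = (1−K')g_D(x) + (1−K)g_{D'}(x') − g_D(x)·g_{D'}(x')` satisfies
`g'' = f'' − (K + K' − KK')` on `S × T` where `f'' = f + f' − f·f'` (the OR of `f, f'`),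
and `L(g'') = |1−K'|·L(g_D) + |1−K|·L(g_{D'}) + L(g_D)·L(g_{D'})`. -/
theorem stmt8 (n m : ℕ)
    (S : Set (Fin n → ℝ)) (T : Set (Fin m → ℝ))
    (f : (Fin n → ℝ) → ℝ) (f' : (Fin m → ℝ) → ℝ)
    (gD : (Fin n → ℝ) → ℝ) (gD' : (Fin m → ℝ) → ℝ) (K K' : ℝ)
    (α : Finset (Fin n) → ℝ) (α' : Finset (Fin m) → ℝ)
    (γ : Finset (Fin (n + m)) → ℝ)
    (hScube : ∀ x ∈ S, IsCube x) (hTcube : ∀ x' ∈ T, IsCube x')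
    (hfBool : ∀ x ∈ S, f x = 0 ∨ f x = 1)
    (hf'Bool : ∀ x' ∈ T, f' x' = 0 ∨ f' x' = 1)
    (hα : Represents gD α) (h0 : α ∅ = 0)
    (hα' : Represents gD' α') (h0' : α' ∅ = 0)
    (hgf : ∀ x ∈ S, f x = gD x + K) (hgf' : ∀ x' ∈ T, f' x' = gD' x' + K')
    (hγ : Represents
      (fun x : Fin (n + m) → ℝ =>
        (1 - K') * gD (fun i => x (Fin.castAdd m i))
          + (1 - K) * gD' (fun j => x (Fin.natAdd n j))
          - gD (fun i => x (Fin.castAdd m i)) * gD' (fun j => x (Fin.natAdd n j))) γ) :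
    (∀ x ∈ S, ∀ x' ∈ T,
      (1 - K') * gD x + (1 - K) * gD' x' - gD x * gD' x'
        = (f x + f' x' - f x * f' x') - (K + K' - K * K')) ∧
    ∑ b : Finset (Fin (n + m)), |γ b| =
      |1 - K'| * (∑ b : Finset (Fin n), |α b|)
        + |1 - K| * (∑ b : Finset (Fin m), |α' b|)
        + (∑ b : Finset (Fin n), |α b|) * (∑ b : Finset (Fin m), |α' b|) := by
  classical
  constructor
  · intro x hx x' hx'
    rw [hgf x hx, hgf' x' hx']
    ring
  · set E := pairFinsetEquiv n m with hE
    set δ : Finset (Fin (n + m)) → ℝ := fun B =>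
      (1 - K') * α (E.symm B).1 * (if (E.symm B).2 = ∅ then 1 else 0)
        + (1 - K) * α' (E.symm B).2 * (if (E.symm B).1 = ∅ then 1 else 0)
        - α (E.symm B).1 * α' (E.symm B).2 with hδ
    have hrep : Represents (fun x : Fin (n + m) → ℝ =>
        (1 - K') * gD (fun i => x (Fin.castAdd m i))
          + (1 - K) * gD' (fun j => x (Fin.natAdd n j))
          - gD (fun i => x (Fin.castAdd m i)) * gD' (fun j => x (Fin.natAdd n j))) δ := by
      intro x hx
      have hxl : IsCube (fun i => x (Fin.castAdd m i)) := fun i => hx _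
      have hxr : IsCube (fun j => x (Fin.natAdd n j)) := fun j => hx _
      rw [← Equiv.sum_comp E (fun B => δ B * ∏ i ∈ B, x i), Fintype.sum_prod_type]
      simp only [hδ, hE, Equiv.symm_apply_apply]
      simp_rw [prod_pairFinsetEquiv]
      rw [expand_sum K K' α α' _ _ (by simp) (by simp)]
      simp only [hα _ hxl, hα' _ hxr]
    have hγδ : γ = δ := repr_unique _ γ δ hγ hrep
    rw [hγδ]
    rw [← Equiv.sum_comp E (fun B => |δ B|), Fintype.sum_prod_type]
    have habs : ∀ (b : Finset (Fin n)) (c : Finset (Fin m)),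
        |δ (E (b, c))| = |1 - K'| * |α b| * (if c = ∅ then 1 else 0)
          + |1 - K| * |α' c| * (if b = ∅ then 1 else 0) + |α b| * |α' c| := by
      intro b c
      simp only [hδ, Equiv.symm_apply_apply]
      by_cases hb : b = ∅ <;> by_cases hc : c = ∅ <;>
        simp [hb, hc, h0, h0', abs_mul, abs_neg]
    simp_rw [habs, Finset.sum_add_distrib]
    have e1 : ∑ b : Finset (Fin n), ∑ c : Finset (Fin m),
        |1 - K'| * |α b| * (if c = ∅ then 1 else 0)
        = |1 - K'| * ∑ b : Finset (Fin n), |α b| := by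
      simp_rw [mul_ite, mul_one, mul_zero, Finset.sum_ite_eq', Finset.mem_univ, if_true,
        Finset.mul_sum]
    have e2 : ∑ b : Finset (Fin n), ∑ c : Finset (Fin m),
        |1 - K| * |α' c| * (if b = ∅ then 1 else 0)
        = |1 - K| * ∑ c : Finset (Fin m), |α' c| := by
      rw [Finset.sum_comm]
      simp_rw [mul_ite, mul_one, mul_zero, Finset.sum_ite_eq', Finset.mem_univ, if_true,
        Finset.mul_sum]
    have e3 : ∑ b : Finset (Fin n), ∑ c : Finset (Fin m), |α b| * |α' c|
        = (∑ b : Finset (Fin n), |α b|) * ∑ c : Finset (Fin m), |α' c| :=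
      (Finset.sum_mul_sum _ _ _ _).symm
    rw [e1, e2, e3]
end

section
/- Suppose g : {-1,1}^n → ℝ has zero constant Fourier coefficient, and for K ∈ ℝ define the iterated sequence g_1 = g and g_{i+1}(x, y) = (g_i(x) + K_i)·(g(y) + K) − K_i·K on {-1,1}^{n·(i+1)}, where K_1 = K and K_{i+1} = K_i·K. If L(g) + |K| > 1 and L(g) > 0, then L(g_i) ≥ (L(g) + |K|)^i − |K|^i, and in particular if L(g) > 1 then L(g_i) grows at least exponentially in i: L(g_i) = Ω(L(g)^i). -/
open Finset


section Unique

variable {ι : Type*} [Fintype ι] [DecidableEq ι]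

lemma neg_one_pow_mod (a : ℕ) : (-1:ℝ)^a = (-1)^(a % 2) := by
  conv_lhs => rw [← Nat.div_add_mod a 2]
  rw [pow_add, pow_mul]
  simp

lemma card_symmDiff_parity (X Y : Finset ι) :
    (symmDiff X Y).card % 2 = (X.card + Y.card) % 2 := by
  have h1 : symmDiff X Y = (X ∪ Y) \ (X ∩ Y) := by
    rw [symmDiff_eq_sup_sdiff_inf]; rfl
  have h2 : (X ∩ Y) ⊆ (X ∪ Y) := (Finset.inter_subset_left).trans Finset.subset_union_left
  have h3 : (symmDiff X Y).card = (X ∪ Y).card - (X ∩ Y).card := by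
    rw [h1, Finset.card_sdiff_of_subset h2]
  have h4 := Finset.card_union_add_card_inter X Y
  have h5 : (X ∩ Y).card ≤ (X ∪ Y).card := Finset.card_le_card h2
  omega

lemma orth_s9 (d : Finset ι) :
    ∑ s : Finset ι, (-1:ℝ) ^ (s ∩ d).card
      = if d = ∅ then (2:ℝ) ^ Fintype.card ι else 0 := by
  split_ifs with hd
  · subst hd
    simp [Fintype.card_finset]
  · obtain ⟨a, ha⟩ := Finset.nonempty_iff_ne_empty.2 hd
    apply Finset.sum_ninvolution (g := fun s => if a ∈ s then s.erase a else insert a s)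
    · intro s
      by_cases hs : a ∈ s
      · have hmem : a ∈ s ∩ d := Finset.mem_inter.2 ⟨hs, ha⟩
        have hc : (s ∩ d).card = ((s ∩ d).erase a).card + 1 :=
          (Finset.card_erase_add_one hmem).symm
        rw [if_pos hs, Finset.erase_inter, hc, pow_succ]
        ring
      · have hmem : a ∉ s ∩ d := fun h => hs (Finset.mem_inter.1 h).1
        have he : (insert a s) ∩ d = insert a (s ∩ d) := by
          rw [Finset.insert_inter_of_mem ha]
        rw [if_neg hs, he, Finset.card_insert_of_notMem hmem, pow_succ]
        ring
    · intro s _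
      by_cases hs : a ∈ s
      · rw [if_pos hs]
        intro h
        exact (Finset.erase_eq_self.1 h) hs
      · rw [if_neg hs]
        intro h
        exact hs (Finset.insert_eq_self.1 h)
    · intro s; exact Finset.mem_univ _
    · intro s
      by_cases hs : a ∈ s
      · have : a ∉ s.erase a := Finset.notMem_erase a s
        rw [if_pos hs, if_neg this, Finset.insert_erase hs]
      · have : a ∈ insert a s := Finset.mem_insert_self a s
        rw [if_neg hs, if_pos this, Finset.erase_insert hs]

lemma rep_unique (β : Finset ι → ℝ)
    (h : ∀ x : ι → ℝ, (∀ i, x i = 1 ∨ x i = -1) →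
      ∑ b : Finset ι, β b * ∏ i ∈ b, x i = 0)
    (c : Finset ι) : β c = 0 := by
  have key : ∀ s : Finset ι, ∑ b : Finset ι, β b * (-1:ℝ) ^ (s ∩ b).card = 0 := by
    intro s
    have hx : ∀ i : ι, (if i ∈ s then (-1:ℝ) else 1) = 1 ∨
        (if i ∈ s then (-1:ℝ) else 1) = -1 := by
      intro i; by_cases h : i ∈ s <;> simp [h]
    have H := h (fun i => if i ∈ s then -1 else 1) hx
    rw [← H]
    refine Finset.sum_congr rfl fun b _ => ?_
    congr 1
    rw [Finset.prod_ite (f := fun _ => (-1:ℝ)) (g := fun _ => (1:ℝ)), Finset.prod_const,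
      Finset.prod_const, one_pow, mul_one, Finset.filter_mem_eq_inter, Finset.inter_comm]
  have inner : ∀ b : Finset ι,
      ∑ s : Finset ι, (-1:ℝ)^(s ∩ c).card * (-1)^(s ∩ b).card
        = if b = c then (2:ℝ)^(Fintype.card ι) else 0 := by
    intro b
    have hpt : ∀ s : Finset ι, (-1:ℝ)^(s ∩ c).card * (-1)^(s ∩ b).card
        = (-1:ℝ)^((s ∩ (symmDiff c b)).card) := by
      intro s
      rw [← pow_add, neg_one_pow_mod, neg_one_pow_mod ((s ∩ (symmDiff c b)).card)]
      congr 1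
      have h1 : s ∩ (symmDiff c b) = symmDiff (s ∩ c) (s ∩ b) := inf_symmDiff_distrib_left s c b
      rw [h1, card_symmDiff_parity]
    rw [Finset.sum_congr rfl fun s _ => hpt s, orth_s9]
    have hcb : (symmDiff c b = ∅) ↔ b = c := by
      rw [← Finset.bot_eq_empty, symmDiff_eq_bot]
      exact ⟨fun h => h.symm, fun h => h.symm⟩
    simp only [hcb]
  have H2 : ∑ s : Finset ι, (-1:ℝ)^(s ∩ c).card *
      (∑ b : Finset ι, β b * (-1:ℝ)^(s ∩ b).card) = 0 := by
    simp [key]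
  have H3 : ∑ b : Finset ι, β b *
      (∑ s : Finset ι, (-1:ℝ)^(s ∩ c).card * (-1)^(s ∩ b).card) = 0 := by
    rw [← H2]
    simp_rw [Finset.mul_sum]
    rw [Finset.sum_comm]
    refine Finset.sum_congr rfl fun s _ => Finset.sum_congr rfl fun b _ => by ring
  rw [Finset.sum_congr rfl fun b _ => by rw [inner b]] at H3
  simp only [mul_ite, mul_zero] at H3
  rw [Finset.sum_ite_eq' Finset.univ c (fun b => β b * (2:ℝ)^(Fintype.card ι))] at H3
  simp only [Finset.mem_univ, if_true] at H3
  have h2 : ((2:ℝ)^(Fintype.card ι)) ≠ 0 := by positivity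
  exact (mul_eq_zero.1 H3).resolve_right h2

end Unique

def finsetSumEquiv (α β : Type*) : Finset α × Finset β ≃ Finset (α ⊕ β) where
  toFun p := p.1.disjSum p.2
  invFun s := (s.toLeft, s.toRight)
  left_inv p := by simp
  right_inv s := Finset.toLeft_disjSum_toRight

def cubeE (i n : ℕ) : (Fin (i+1) × Fin n) ⊕ Fin n ≃ Fin (i+2) × Fin n where
  toFun x := Sum.elim (fun p => (p.1.castSucc, p.2)) (fun k => (Fin.last (i+1), k)) x
  invFun q := if h : q.1 = Fin.last (i+1) then Sum.inr q.2
    else Sum.inl (q.1.castPred h, q.2)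
  left_inv x := by
    rcases x with ⟨j, k⟩ | k
    · have : j.castSucc ≠ Fin.last (i+1) := (Fin.castSucc_lt_last j).ne
      simp [this]
    · simp
  right_inv q := by
    rcases q with ⟨j, k⟩
    by_cases h : j = Fin.last (i+1)
    · simp [h]
    · simp [h]

def pairE (i n : ℕ) : Finset (Fin (i+1) × Fin n) × Finset (Fin n)
    ≃ Finset (Fin (i+2) × Fin n) :=
  (finsetSumEquiv _ _).trans (cubeE i n).finsetCongr

lemma pairE_eq_empty (i n : ℕ) (p : Finset (Fin (i+1) × Fin n) × Finset (Fin n)) :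
    pairE i n p = ∅ ↔ p.1 = ∅ ∧ p.2 = ∅ := by
  simp [pairE, finsetSumEquiv, Finset.map_eq_empty, Finset.disjSum_eq_empty]

lemma pairE_prod (i n : ℕ) (p : Finset (Fin (i+1) × Fin n) × Finset (Fin n))
    (F : Fin (i+2) × Fin n → ℝ) :
    ∏ q ∈ pairE i n p, F q =
      (∏ r ∈ p.1, F (r.1.castSucc, r.2)) * ∏ k ∈ p.2, F (Fin.last (i+1), k) := by
  show ∏ q ∈ (p.1.disjSum p.2).map (cubeE i n).toEmbedding, F q = _
  rw [Finset.prod_map, Finset.prod_disjSum]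
  rfl

def blockE (n : ℕ) : Fin 1 × Fin n ≃ Fin n where
  toFun p := p.2
  invFun k := (0, k)
  left_inv p := by
    obtain ⟨j, k⟩ := p
    simp [Subsingleton.elim j 0]
  right_inv k := rfl

noncomputable def beta (n : ℕ) (K : ℝ) (α : Finset (Fin n) → ℝ) :
    (i : ℕ) → Finset (Fin (i+1) × Fin n) → ℝ
  | 0 => fun b => α ((blockE n).finsetCongr b)
  | (i+1) => fun b =>
      (beta n K α i ((pairE i n).symm b).1 +
        (if ((pairE i n).symm b).1 = ∅ then K^(i+1) else 0)) *
      (α ((pairE i n).symm b).2 + (if ((pairE i n).symm b).2 = ∅ then K else 0)) -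
      (if b = ∅ then K^(i+1) * K else 0)

lemma beta_spec (n : ℕ) (g : (Fin n → ℝ) → ℝ) (K : ℝ) (α : Finset (Fin n) → ℝ)
    (hα : ∀ x : Fin n → ℝ, IsCube x → g x = ∑ b : Finset (Fin n), α b * ∏ i ∈ b, x i)
    (h0 : α ∅ = 0)
    (G : (i : ℕ) → (Fin (i + 1) → Fin n → ℝ) → ℝ)
    (hG0 : ∀ y, G 0 y = g (y 0))
    (hGsucc : ∀ (i : ℕ) (y : Fin (i + 2) → Fin n → ℝ),
      G (i + 1) y =
        (G i (fun j => y j.castSucc) + K ^ (i + 1)) * (g (y (Fin.last (i + 1))) + K)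
          - K ^ (i + 1) * K) :
    ∀ i : ℕ, beta n K α i ∅ = 0 ∧
      (∀ y : Fin (i+1) → Fin n → ℝ, (∀ j, IsCube (y j)) →
        G i y = ∑ b : Finset (Fin (i+1) × Fin n), beta n K α i b * ∏ p ∈ b, y p.1 p.2) ∧
      (∑ b : Finset (Fin (i+1) × Fin n), |beta n K α i b|)
        = ((∑ b : Finset (Fin n), |α b|) + |K|) ^ (i+1) - |K| ^ (i+1) := by
  intro i
  induction i with
  | zero =>
    refine ⟨by simpa [beta] using h0, ?_, ?_⟩
    · intro y hy
      rw [hG0, hα (y 0) (hy 0)]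
      rw [← Equiv.sum_comp ((blockE n).finsetCongr.symm)
        (fun b => beta n K α 0 b * ∏ p ∈ b, y p.1 p.2)]
      refine Finset.sum_congr rfl fun c _ => ?_
      have h1 : beta n K α 0 ((blockE n).finsetCongr.symm c) = α c := by
        show α ((blockE n).finsetCongr ((blockE n).finsetCongr.symm c)) = α c
        rw [Equiv.apply_symm_apply]
      have h2 : ∏ p ∈ (blockE n).finsetCongr.symm c, y p.1 p.2 = ∏ k ∈ c, y 0 k := by
        show ∏ p ∈ c.map (blockE n).symm.toEmbedding, y p.1 p.2 = _
        rw [Finset.prod_map]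
        rfl
      rw [h1, h2]
    · rw [← Equiv.sum_comp ((blockE n).finsetCongr.symm)
        (fun b => |beta n K α 0 b|)]
      have : ∀ c : Finset (Fin n),
          |beta n K α 0 ((blockE n).finsetCongr.symm c)| = |α c| := by
        intro c
        show |α ((blockE n).finsetCongr ((blockE n).finsetCongr.symm c))| = _
        rw [Equiv.apply_symm_apply]
      rw [Finset.sum_congr rfl fun c _ => this c]
      ring
  | succ i ih =>
    obtain ⟨ih0, ihrep, ihL⟩ := ih
    set L := ∑ b : Finset (Fin n), |α b| with hL
    set γ : Finset (Fin (i+1) × Fin n) → ℝ :=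
      fun b₁ => beta n K α i b₁ + (if b₁ = ∅ then K^(i+1) else 0) with hγ
    set δ : Finset (Fin n) → ℝ :=
      fun b₂ => α b₂ + (if b₂ = ∅ then K else 0) with hδ
    have hbeta : ∀ b, beta n K α (i+1) b =
        γ ((pairE i n).symm b).1 * δ ((pairE i n).symm b).2 -
          (if b = ∅ then K^(i+1) * K else 0) := fun b => rfl
    have habsγ : ∀ b₁, |γ b₁| = |beta n K α i b₁| + (if b₁ = ∅ then |K|^(i+1) else 0) := by
      intro b₁
      by_cases hb : b₁ = ∅
      · simp [hγ, hb, ih0, abs_pow]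
      · simp [hγ, hb]
    have habsδ : ∀ b₂, |δ b₂| = |α b₂| + (if b₂ = ∅ then |K| else 0) := by
      intro b₂
      by_cases hb : b₂ = ∅
      · simp [hδ, hb, h0]
      · simp [hδ, hb]
    have hsumγ : ∑ b₁ : Finset (Fin (i+1) × Fin n), |γ b₁|
        = ((L + |K|)^(i+1) - |K|^(i+1)) + |K|^(i+1) := by
      rw [Finset.sum_congr rfl fun b₁ _ => habsγ b₁, Finset.sum_add_distrib, ihL,
        Finset.sum_ite_eq' Finset.univ ∅ (fun _ => |K|^(i+1))]
      simp
    have hsumδ : ∑ b₂ : Finset (Fin n), |δ b₂| = L + |K| := by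
      rw [Finset.sum_congr rfl fun b₂ _ => habsδ b₂, Finset.sum_add_distrib,
        Finset.sum_ite_eq' Finset.univ ∅ (fun _ => |K|)]
      simp [hL]
    have hempty0 : beta n K α (i+1) ∅ = 0 := by
      have hDemp : pairE i n (∅, ∅) = ∅ := (pairE_eq_empty i n (∅, ∅)).2 ⟨rfl, rfl⟩
      have hsymm : (pairE i n).symm ∅ = (∅, ∅) := by
        rw [← hDemp, Equiv.symm_apply_apply]
      rw [hbeta, hsymm]
      simp [hγ, hδ, ih0, h0]
    refine ⟨hempty0, ?_, ?_⟩
    · intro y hy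
      rw [hGsucc, ihrep _ (fun j => hy _), hα _ (hy _)]
      have e1 : (∑ b₁ : Finset (Fin (i+1) × Fin n),
            beta n K α i b₁ * ∏ p ∈ b₁, y p.1.castSucc p.2) + K^(i+1)
          = ∑ b₁ : Finset (Fin (i+1) × Fin n), γ b₁ * ∏ p ∈ b₁, y p.1.castSucc p.2 := by
        have : ∀ b₁ : Finset (Fin (i+1) × Fin n),
            γ b₁ * ∏ p ∈ b₁, y p.1.castSucc p.2
              = beta n K α i b₁ * (∏ p ∈ b₁, y p.1.castSucc p.2)
                + (if b₁ = ∅ then K^(i+1) else 0) := by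
          intro b₁
          by_cases hb : b₁ = ∅
          · simp [hγ, hb, add_mul]
          · simp [hγ, hb]
        rw [Finset.sum_congr rfl fun b₁ _ => this b₁, Finset.sum_add_distrib,
          Finset.sum_ite_eq' Finset.univ ∅ (fun _ => K^(i+1))]
        simp
      have e2 : (∑ b₂ : Finset (Fin n), α b₂ * ∏ k ∈ b₂, y (Fin.last (i+1)) k) + K
          = ∑ b₂ : Finset (Fin n), δ b₂ * ∏ k ∈ b₂, y (Fin.last (i+1)) k := by
        have : ∀ b₂ : Finset (Fin n),
            δ b₂ * ∏ k ∈ b₂, y (Fin.last (i+1)) k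
              = α b₂ * (∏ k ∈ b₂, y (Fin.last (i+1)) k)
                + (if b₂ = ∅ then K else 0) := by
          intro b₂
          by_cases hb : b₂ = ∅
          · simp [hδ, hb, add_mul]
          · simp [hδ, hb]
        rw [Finset.sum_congr rfl fun b₂ _ => this b₂, Finset.sum_add_distrib,
          Finset.sum_ite_eq' Finset.univ ∅ (fun _ => K)]
        simp
      rw [e1, e2, Finset.sum_mul_sum]
      have e3 : ∑ b₁ : Finset (Fin (i+1) × Fin n), ∑ b₂ : Finset (Fin n),
            (γ b₁ * ∏ p ∈ b₁, y p.1.castSucc p.2) *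
              (δ b₂ * ∏ k ∈ b₂, y (Fin.last (i+1)) k)
          = ∑ b : Finset (Fin (i+2) × Fin n),
              γ ((pairE i n).symm b).1 * δ ((pairE i n).symm b).2 *
                ∏ q ∈ b, y q.1 q.2 := by
        have hp2 : ∑ p : Finset (Fin (i+1) × Fin n) × Finset (Fin n),
            (γ p.1 * ∏ r ∈ p.1, y r.1.castSucc r.2) *
              (δ p.2 * ∏ k ∈ p.2, y (Fin.last (i+1)) k)
            = ∑ b₁ : Finset (Fin (i+1) × Fin n), ∑ b₂ : Finset (Fin n),
              (γ b₁ * ∏ p ∈ b₁, y p.1.castSucc p.2) *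
                (δ b₂ * ∏ k ∈ b₂, y (Fin.last (i+1)) k) := Fintype.sum_prod_type _
        rw [← hp2]
        rw [← Equiv.sum_comp ((pairE i n).symm)
          (fun p => (γ p.1 * ∏ r ∈ p.1, y r.1.castSucc r.2) *
            (δ p.2 * ∏ k ∈ p.2, y (Fin.last (i+1)) k))]
        refine Finset.sum_congr rfl fun b _ => ?_
        have := pairE_prod i n ((pairE i n).symm b) (fun q => y q.1 q.2)
        rw [Equiv.apply_symm_apply] at this
        dsimp only at this
        rw [this]
        ring
      rw [e3]
      have e4 : (K^(i+1) * K : ℝ)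
          = ∑ b : Finset (Fin (i+2) × Fin n),
              (if b = ∅ then K^(i+1) * K else 0) * ∏ q ∈ b, y q.1 q.2 := by
        have : ∀ b : Finset (Fin (i+2) × Fin n),
            (if b = ∅ then K^(i+1) * K else 0) * ∏ q ∈ b, y q.1 q.2
              = (if b = ∅ then K^(i+1) * K else 0) := by
          intro b
          by_cases hb : b = ∅ <;> simp [hb]
        rw [Finset.sum_congr rfl fun b _ => this b,
          Finset.sum_ite_eq' Finset.univ ∅ (fun _ => K^(i+1) * K)]
        simp
      rw [e4, ← Finset.sum_sub_distrib]
      refine Finset.sum_congr rfl fun b _ => ?_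
      rw [hbeta, sub_mul]
    · rw [← Equiv.sum_comp (pairE i n) (fun b => |beta n K α (i+1) b|)]
      have hpt : ∀ p : Finset (Fin (i+1) × Fin n) × Finset (Fin n),
          |beta n K α (i+1) (pairE i n p)|
            = |γ p.1| * |δ p.2| - (if p = (∅, ∅) then |K|^(i+1) * |K| else 0) := by
        intro p
        rw [hbeta, Equiv.symm_apply_apply]
        by_cases hp : p = (∅, ∅)
        · have hb : pairE i n p = ∅ := by
            rw [pairE_eq_empty, hp]
            exact ⟨rfl, rfl⟩
          rw [if_pos hb, if_pos hp]
          subst hp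
          simp [hγ, hδ, ih0, h0, abs_pow]
        · have hb : pairE i n p ≠ ∅ := by
            rw [Ne, pairE_eq_empty]
            intro h
            exact hp (Prod.ext h.1 h.2)
          rw [if_neg hb, if_neg hp, sub_zero, sub_zero, abs_mul]
      rw [Finset.sum_congr rfl fun p _ => hpt p, Finset.sum_sub_distrib]
      have h5 : ∑ p : Finset (Fin (i+1) × Fin n) × Finset (Fin n),
          (if p = (∅, ∅) then |K|^(i+1) * |K| else 0) = |K|^(i+1) * |K| := by
        rw [Finset.sum_ite_eq' Finset.univ (∅, ∅) (fun _ => |K|^(i+1) * |K|)]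
        simp
      have h6 : ∑ p : Finset (Fin (i+1) × Fin n) × Finset (Fin n), |γ p.1| * |δ p.2|
          = (∑ b₁ : Finset (Fin (i+1) × Fin n), |γ b₁|) *
            (∑ b₂ : Finset (Fin n), |δ b₂|) := by
        have h7 : ∑ p : Finset (Fin (i+1) × Fin n) × Finset (Fin n), |γ p.1| * |δ p.2|
            = ∑ b₁ : Finset (Fin (i+1) × Fin n), ∑ b₂ : Finset (Fin n),
                |γ b₁| * |δ b₂| := Fintype.sum_prod_type _
        rw [h7, ← Finset.sum_mul_sum]
      rw [h5, h6, hsumγ, hsumδ]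
      ring


/-- Iterating the AND-composition `g_{i+1}(x,y) = (g_i(x)+K_i)(g(y)+K) − K_i·K`
(with `K_i = K^i`, `g_1 = g`, blocks of variables disjoint) gives
`L(g_i) ≥ (L(g)+|K|)^i − |K|^i`; in particular if `L(g) > 1` then
`L(g_i) = Ω(L(g)^i)` grows at least exponentially.  Here `G i` stands for `g_{i+1}`,
its variables are grouped into `i+1` blocks of `n`, and `A i` is its Fourier
expansion over the index type `Fin (i+1) × Fin n`. -/
theorem stmt9 (n : ℕ) (g : (Fin n → ℝ) → ℝ) (K : ℝ) (α : Finset (Fin n) → ℝ)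
    (hα : Represents g α) (h0 : α ∅ = 0)
    (hL1 : 1 < (∑ b : Finset (Fin n), |α b|) + |K|)
    (hLpos : 0 < ∑ b : Finset (Fin n), |α b|)
    (G : (i : ℕ) → (Fin (i + 1) → Fin n → ℝ) → ℝ)
    (hG0 : ∀ y, G 0 y = g (y 0))
    (hGsucc : ∀ (i : ℕ) (y : Fin (i + 2) → Fin n → ℝ),
      G (i + 1) y =
        (G i (fun j => y j.castSucc) + K ^ (i + 1)) * (g (y (Fin.last (i + 1))) + K)
          - K ^ (i + 1) * K)
    (A : (i : ℕ) → Finset (Fin (i + 1) × Fin n) → ℝ)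
    (hA : ∀ (i : ℕ) (y : Fin (i + 1) → Fin n → ℝ), (∀ j, IsCube (y j)) →
      G i y = ∑ b : Finset (Fin (i + 1) × Fin n), A i b * ∏ p ∈ b, y p.1 p.2) :
    (∀ i : ℕ,
      ((∑ b : Finset (Fin n), |α b|) + |K|) ^ (i + 1) - |K| ^ (i + 1) ≤
        ∑ b : Finset (Fin (i + 1) × Fin n), |A i b|) ∧
    (1 < ∑ b : Finset (Fin n), |α b| →
      ∃ c : ℝ, 0 < c ∧ ∀ i : ℕ,
        c * (∑ b : Finset (Fin n), |α b|) ^ (i + 1) ≤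
          ∑ b : Finset (Fin (i + 1) × Fin n), |A i b|) := by
  have hspec := beta_spec n g K α hα h0 G hG0 hGsucc
  have hAeq : ∀ (i : ℕ) (b : Finset (Fin (i+1) × Fin n)), A i b = beta n K α i b := by
    intro i b
    have hzero : ∀ x : (Fin (i+1) × Fin n) → ℝ, (∀ p, x p = 1 ∨ x p = -1) →
        ∑ c : Finset (Fin (i+1) × Fin n),
          (A i c - beta n K α i c) * ∏ p ∈ c, x p = 0 := by
      intro x hx
      have hy : ∀ j, IsCube (fun k => x (j, k)) := fun j k => hx (j, k)
      have h1 := hA i (fun j k => x (j, k)) hy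
      have h2 := (hspec i).2.1 (fun j k => x (j, k)) hy
      have e1 : ∑ c : Finset (Fin (i+1) × Fin n), A i c * ∏ p ∈ c, x p
          = G i (fun j k => x (j, k)) := h1.symm
      have e2 : G i (fun j k => x (j, k))
          = ∑ c : Finset (Fin (i+1) × Fin n), beta n K α i c * ∏ p ∈ c, x p := h2
      have h4 : ∑ c : Finset (Fin (i+1) × Fin n), A i c * ∏ p ∈ c, x p
          = ∑ c : Finset (Fin (i+1) × Fin n), beta n K α i c * ∏ p ∈ c, x p := by
        rw [e1, e2]
      simp_rw [sub_mul]
      rw [Finset.sum_sub_distrib, h4, sub_self]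
    have := rep_unique _ hzero b
    linarith [this]
  have hsum : ∀ i : ℕ, ∑ b : Finset (Fin (i+1) × Fin n), |A i b|
      = ((∑ b : Finset (Fin n), |α b|) + |K|) ^ (i+1) - |K| ^ (i+1) := by
    intro i
    rw [Finset.sum_congr rfl fun b _ => by rw [hAeq i b]]
    exact (hspec i).2.2
  constructor
  · intro i
    rw [hsum i]
  · intro hLgt
    refine ⟨1, one_pos, fun i => ?_⟩
    rw [hsum i, one_mul]
    have hK : (0:ℝ) ≤ |K| := abs_nonneg K
    have hLnn : (0:ℝ) ≤ ∑ b : Finset (Fin n), |α b| := le_of_lt hLpos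
    have := pow_add_pow_le hLnn hK (show i + 1 ≠ 0 by omega)
    linarith
end
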